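/- Let d ≥ 1 and let A ⊆ ℤ^d. If the lower density of A equals α > 0 and lim_{i→∞} d̄(A^{[i]}) = α, then A is lower thick of level α; that is, for every k ∈ ℕ, the lower density of {z ∈ ℤ^d : z + [-k,k]^d ⊆ A} is at least α. -/

import Mathlib

open Filter Pointwise

/-- The `d`-dimensional cube `[-m, m]^d` in `ℤ^d`. -/
def cube (d m : ℕ) : Set (Fin d → ℤ) :=
  Set.Icc (fun _ => -(m : ℤ)) (fun _ => (m : ℤ))

/-- The translated cube `z + [-k, k]^d`. -/
def cubeAt (d k : ℕ) (z : Fin d → ℤ) : Set (Fin d → ℤ) :=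
  Set.Icc (fun i => z i - (k : ℤ)) (fun i => z i + (k : ℤ))

/-- The `n`-block set `A_{[n]} = {x : (n·x + [0, n-1]^d) ∩ A ≠ ∅}`. -/
def blockSet (d : ℕ) (A : Set (Fin d → ℤ)) (n : ℕ) : Set (Fin d → ℤ) :=
  {x | ∃ t ∈ Set.Icc (0 : Fin d → ℤ) (fun _ => (n : ℤ) - 1), (n : ℤ) • x + t ∈ A}

/-- The set `A^{[n]} = n·A_{[n]} + [0, n-1]^d`. -/
def superBlockSet (d : ℕ) (A : Set (Fin d → ℤ)) (n : ℕ) : Set (Fin d → ℤ) :=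
  {w | ∃ x ∈ blockSet d A n,
    ∃ t ∈ Set.Icc (0 : Fin d → ℤ) (fun _ => (n : ℤ) - 1), w = (n : ℤ) • x + t}

/-- Upper asymptotic density of `A ⊆ ℤ^d`. -/
noncomputable def upperDensity (d : ℕ) (A : Set (Fin d → ℤ)) : ℝ :=
  limsup (fun n : ℕ => (Set.ncard (A ∩ cube d n) : ℝ) / (2 * (n : ℝ) + 1) ^ d) atTop

/-- Lower asymptotic density of `A ⊆ ℤ^d`. -/
noncomputable def lowerDensity (d : ℕ) (A : Set (Fin d → ℤ)) : ℝ :=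
  liminf (fun n : ℕ => (Set.ncard (A ∩ cube d n) : ℝ) / (2 * (n : ℝ) + 1) ^ d) atTop

/-! ### Auxiliary lemmas -/

lemma cube_finite (d m : ℕ) : (cube d m).Finite := Set.finite_Icc _ _

lemma ncard_Icc_pi {d : ℕ} (a b : Fin d → ℤ) :
    (Set.Icc a b).ncard = ∏ i, (b i + 1 - a i).toNat := by
  rw [← Finset.coe_Icc, Set.ncard_coe_finset, Pi.card_Icc]
  simp [Int.card_Icc]

lemma ncard_cube (d m : ℕ) : (cube d m).ncard = (2*m+1)^d := by
  rw [cube, ncard_Icc_pi]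
  have h : ∀ i : Fin d, ((m:ℤ) + 1 - (-(m:ℤ))).toNat = 2*m+1 := fun i => by omega
  rw [Finset.prod_congr rfl (fun i _ => h i)]
  simp

lemma ncard_cubeAt (d k : ℕ) (z : Fin d → ℤ) : (cubeAt d k z).ncard = (2*k+1)^d := by
  rw [cubeAt, ncard_Icc_pi]
  have h : ∀ i : Fin d, (z i + (k:ℤ) + 1 - (z i - (k:ℤ))).toNat = 2*k+1 := fun i => by omega
  rw [Finset.prod_congr rfl (fun i _ => h i)]
  simp

lemma mem_cube_iff {d m : ℕ} {z : Fin d → ℤ} :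
    z ∈ cube d m ↔ ∀ j, -(m:ℤ) ≤ z j ∧ z j ≤ m := by
  simp only [cube, Set.mem_Icc, Pi.le_def]
  constructor
  · rintro ⟨h1, h2⟩ j; exact ⟨h1 j, h2 j⟩
  · intro h; exact ⟨fun j => (h j).1, fun j => (h j).2⟩

lemma subset_superBlockSet (d i : ℕ) (hi : 1 ≤ i) (A : Set (Fin d → ℤ)) :
    A ⊆ superBlockSet d A i := by
  intro a ha
  have hi' : (0:ℤ) < i := by exact_mod_cast hi
  have hmem : (fun j => a j % (i:ℤ)) ∈ Set.Icc (0 : Fin d → ℤ) (fun _ => (i:ℤ) - 1) := by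
    rw [Set.mem_Icc]
    constructor <;> intro j
    · show (0:ℤ) ≤ a j % (i:ℤ)
      exact Int.emod_nonneg _ (by positivity)
    · show a j % (i:ℤ) ≤ (i:ℤ) - 1
      have := Int.emod_lt_of_pos (a j) hi'; omega
  have heq : (i:ℤ) • (fun j => a j / (i:ℤ)) + (fun j => a j % (i:ℤ)) = a := by
    funext j
    simp only [Pi.add_apply, Pi.smul_apply, smul_eq_mul]
    exact Int.mul_ediv_add_emod (a j) i
  exact ⟨fun j => a j / (i:ℤ), ⟨fun j => a j % (i:ℤ), hmem, by rw [heq]; exact ha⟩,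
    fun j => a j % (i:ℤ), hmem, heq.symm⟩

lemma diff_count (d i m : ℕ) (hi : 1 ≤ i) (A : Set (Fin d → ℤ)) :
    ((superBlockSet d A i \ A) ∩ cube d m).ncard + (A ∩ cube d m).ncard
      = (superBlockSet d A i ∩ cube d m).ncard := by
  have h1 : (superBlockSet d A i \ A) ∩ cube d m
      = (superBlockSet d A i ∩ cube d m) \ (A ∩ cube d m) := by
    ext z; simp only [Set.mem_inter_iff, Set.mem_diff]; tauto
  have h2 : A ∩ cube d m ⊆ superBlockSet d A i ∩ cube d m :=
    Set.inter_subset_inter_left _ (subset_superBlockSet d i hi A)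
  rw [h1, Set.ncard_diff_add_ncard_of_subset h2
    ((cube_finite d m).subset Set.inter_subset_right)]

lemma density_le_one (d : ℕ) (B : Set (Fin d → ℤ)) (n : ℕ) :
    (Set.ncard (B ∩ cube d n) : ℝ) / (2 * (n : ℝ) + 1) ^ d ≤ 1 := by
  rw [div_le_one (by positivity)]
  have h1 : Set.ncard (B ∩ cube d n) ≤ (2*n+1)^d :=
    (ncard_cube d n) ▸ Set.ncard_inter_le_ncard_right _ _ (cube_finite d n)
  calc (Set.ncard (B ∩ cube d n) : ℝ) ≤ ((2*n+1:ℕ)^d : ℕ) := by exact_mod_cast h1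
    _ = (2 * (n : ℝ) + 1) ^ d := by push_cast; ring

lemma density_nonneg (d : ℕ) (B : Set (Fin d → ℤ)) (n : ℕ) :
    0 ≤ (Set.ncard (B ∩ cube d n) : ℝ) / (2 * (n : ℝ) + 1) ^ d := by positivity

/-- Counting integers in `[-n,n]` with residue mod `i` in the bad set. -/
lemma line_bound (k i n : ℕ) (hi : 1 ≤ i) :
    ((Finset.Icc (-(n:ℤ)) (n:ℤ)).filter
        (fun a => a % (i:ℤ) < k ∨ (i:ℤ) - k ≤ a % (i:ℤ))).card
      ≤ 2*k*(2*(n/i)+2) := by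
  classical
  have hi' : (0:ℤ) < i := by exact_mod_cast hi
  set Q : Finset ℤ := Finset.Icc (-((n:ℤ)/(i:ℤ)) - 1) ((n:ℤ)/(i:ℤ)) with hQdef
  set R : Finset ℤ := (Finset.Ico (0:ℤ) (k:ℤ)) ∪ (Finset.Icc ((i:ℤ)-k) ((i:ℤ)-1)) with hRdef
  have hmaps : ∀ a ∈ (Finset.Icc (-(n:ℤ)) (n:ℤ)).filter
      (fun a => a % (i:ℤ) < k ∨ (i:ℤ) - k ≤ a % (i:ℤ)),
      (a / (i:ℤ), a % (i:ℤ)) ∈ Q ×ˢ R := by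
    intro a ha
    rw [Finset.mem_filter, Finset.mem_Icc] at ha
    obtain ⟨⟨ha1, ha2⟩, hcond⟩ := ha
    rw [Finset.mem_product]
    constructor
    · rw [hQdef, Finset.mem_Icc]
      constructor
      · show -((n:ℤ)/(i:ℤ)) - 1 ≤ a / (i:ℤ)
        rw [Int.le_ediv_iff_mul_le hi']
        have hq := Int.mul_ediv_add_emod (n:ℤ) (i:ℤ)
        have hr := Int.emod_lt_of_pos (n:ℤ) hi'
        nlinarith [hq, hr, ha1]
      · exact Int.ediv_le_ediv hi' ha2
    · have hnn : 0 ≤ a % (i:ℤ) := Int.emod_nonneg _ (by positivity)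
      have hlt : a % (i:ℤ) < i := Int.emod_lt_of_pos _ hi'
      rw [hRdef, Finset.mem_union, Finset.mem_Ico, Finset.mem_Icc]
      rcases hcond with h | h
      · exact Or.inl ⟨hnn, h⟩
      · exact Or.inr ⟨h, by omega⟩
  have hinj : Set.InjOn (fun a => (a / (i:ℤ), a % (i:ℤ)))
      ↑((Finset.Icc (-(n:ℤ)) (n:ℤ)).filter
        (fun a => a % (i:ℤ) < k ∨ (i:ℤ) - k ≤ a % (i:ℤ))) := by
    intro a _ b _ h
    have h1 : a / (i:ℤ) = b / (i:ℤ) := congrArg Prod.fst h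
    have h2 : a % (i:ℤ) = b % (i:ℤ) := congrArg Prod.snd h
    have ha := Int.mul_ediv_add_emod a i
    have hb := Int.mul_ediv_add_emod b i
    rw [h1, h2] at ha
    omega
  calc ((Finset.Icc (-(n:ℤ)) (n:ℤ)).filter _).card ≤ (Q ×ˢ R).card :=
        Finset.card_le_card_of_injOn _ hmaps hinj
    _ = Q.card * R.card := Finset.card_product _ _
    _ ≤ (2*(n/i)+2) * (2*k) := by
        have hq : Q.card = 2*(n/i)+2 := by
          rw [hQdef, Int.card_Icc]
          have : ((n:ℤ))/(i:ℤ) = ((n/i : ℕ) : ℤ) := (Int.natCast_ediv n i).symm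
          rw [this]; omega
        have hr : R.card ≤ 2*k := by
          calc R.card ≤ (Finset.Ico (0:ℤ) (k:ℤ)).card
              + (Finset.Icc ((i:ℤ)-k) ((i:ℤ)-1)).card := Finset.card_union_le _ _
            _ ≤ 2*k := by rw [Int.card_Ico, Int.card_Icc]; omega
        exact Nat.mul_le_mul hq.le hr
    _ = 2*k*(2*(n/i)+2) := by ring

/-- Counting points of the cube lying in a bad strip in coordinate `j`. -/
lemma strip_bound (d k i n : ℕ) (hi : 1 ≤ i) (j : Fin d) :
    {z | z ∈ cube d n ∧ ((z j) % (i:ℤ) < k ∨ (i:ℤ) - k ≤ (z j) % (i:ℤ))}.ncard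
      ≤ (2*k*(2*(n/i)+2)) * (2*n+1)^(d-1) := by
  classical
  set S := {z | z ∈ cube d n ∧ ((z j) % (i:ℤ) < k ∨ (i:ℤ) - k ≤ (z j) % (i:ℤ))} with hSdef
  have hfin : S.Finite := (cube_finite d n).subset (fun z hz => hz.1)
  rw [Set.ncard_eq_toFinset_card _ hfin]
  set badline := (Finset.Icc (-(n:ℤ)) (n:ℤ)).filter
      (fun a => a % (i:ℤ) < k ∨ (i:ℤ) - k ≤ a % (i:ℤ)) with hbldef
  set cube0 := Finset.Icc (fun l => if l = j then (0:ℤ) else -(n:ℤ))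
      (fun l => if l = j then (0:ℤ) else (n:ℤ)) with hc0def
  have hmaps : ∀ z ∈ hfin.toFinset,
      (z j, Function.update z j 0) ∈ badline ×ˢ cube0 := by
    intro z hz
    rw [Set.Finite.mem_toFinset] at hz
    obtain ⟨hzc, hcond⟩ := hz
    rw [mem_cube_iff] at hzc
    rw [Finset.mem_product]
    constructor
    · rw [hbldef, Finset.mem_filter, Finset.mem_Icc]
      exact ⟨⟨(hzc j).1, (hzc j).2⟩, hcond⟩
    · rw [hc0def, Finset.mem_Icc]
      constructor <;> intro l <;> simp only [Function.update_apply] <;> split_ifs with hl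
      · exact le_refl 0
      · exact (hzc l).1
      · exact le_refl 0
      · exact (hzc l).2
  have hinj : Set.InjOn (fun z : Fin d → ℤ => (z j, Function.update z j 0)) ↑hfin.toFinset := by
    intro z _ z' _ h
    have h1 : z j = z' j := congrArg Prod.fst h
    have h2 : Function.update z j 0 = Function.update z' j 0 := congrArg Prod.snd h
    funext l
    by_cases hl : l = j
    · rw [hl]; exact h1
    · have := congrFun h2 l
      simpa [Function.update, hl] using this
  have hcube0 : cube0.card = (2*n+1)^(d-1) := by
    rw [hc0def, Pi.card_Icc]
    have heq : ∀ l : Fin d,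
        (Finset.Icc (if l = j then (0:ℤ) else -(n:ℤ)) (if l = j then (0:ℤ) else (n:ℤ))).card
          = if l = j then 1 else 2*n+1 := by
      intro l; rw [Int.card_Icc]; split_ifs <;> omega
    rw [Finset.prod_congr rfl (fun l _ => heq l)]
    rw [← Finset.mul_prod_erase Finset.univ _ (Finset.mem_univ j), if_pos rfl, one_mul]
    rw [Finset.prod_congr rfl (fun l hl => if_neg (Finset.ne_of_mem_erase hl))]
    rw [Finset.prod_const, Finset.card_erase_of_mem (Finset.mem_univ j),
      Finset.card_univ, Fintype.card_fin]
  calc hfin.toFinset.card ≤ (badline ×ˢ cube0).card :=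
        Finset.card_le_card_of_injOn (fun z : Fin d → ℤ => (z j, Function.update z j 0)) hmaps hinj
    _ = badline.card * cube0.card := Finset.card_product _ _
    _ ≤ (2*k*(2*(n/i)+2)) * (2*n+1)^(d-1) := by
        rw [hcube0]
        exact Nat.mul_le_mul_right _ (line_bound k i n hi)

/-- Interior points of `A` minus the thick core map to holes in `A^{[i]} \ A`. -/
lemma hole_bound (d k i n : ℕ) (hki : 2*k+1 ≤ i) (A : Set (Fin d → ℤ)) :
    {z | z ∈ A ∩ cube d n ∧ ¬ cubeAt d k z ⊆ A ∧
        ∀ j, (k:ℤ) ≤ (z j) % (i:ℤ) ∧ (z j) % (i:ℤ) ≤ (i:ℤ) - 1 - k}.ncard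
      ≤ (2*k+1)^d * ((superBlockSet d A i \ A) ∩ cube d (n+k)).ncard := by
  classical
  have hi' : (0:ℤ) < i := by exact_mod_cast Nat.lt_of_lt_of_le (Nat.zero_lt_succ _) hki
  set E := (superBlockSet d A i \ A) ∩ cube d (n+k) with hEdef
  set D := {z | z ∈ A ∩ cube d n ∧ ¬ cubeAt d k z ⊆ A ∧
      ∀ j, (k:ℤ) ≤ (z j) % (i:ℤ) ∧ (z j) % (i:ℤ) ≤ (i:ℤ) - 1 - k} with hDdef
  have hDfin : D.Finite := (cube_finite d n).subset (fun z hz => hz.1.2)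
  have hEfin : E.Finite := (cube_finite d (n+k)).subset Set.inter_subset_right
  set f : (Fin d → ℤ) → (Fin d → ℤ) :=
    fun z => if h : ∃ w ∈ cubeAt d k z, w ∉ A then h.choose else z with hfdef
  have hfspec : ∀ z, (∃ w ∈ cubeAt d k z, w ∉ A) → f z ∈ cubeAt d k z ∧ f z ∉ A := by
    intro z h
    rw [hfdef]; simp only [dif_pos h]
    exact ⟨h.choose_spec.1, h.choose_spec.2⟩
  have hmem_cubeAt : ∀ z v : Fin d → ℤ, v ∈ cubeAt d k z ↔
      ∀ l, z l - k ≤ v l ∧ v l ≤ z l + k := by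
    intro z v
    simp only [cubeAt, Set.mem_Icc, Pi.le_def]
    constructor
    · rintro ⟨h1, h2⟩ l; exact ⟨h1 l, h2 l⟩
    · intro h; exact ⟨fun l => (h l).1, fun l => (h l).2⟩
  -- f maps D into E
  have hmapsE : ∀ z ∈ D, f z ∈ E := by
    intro z hz
    obtain ⟨⟨hzA, hzc⟩, hnsub, hint⟩ := hz
    have hex : ∃ w ∈ cubeAt d k z, w ∉ A := by
      obtain ⟨w, hw1, hw2⟩ := Set.not_subset.mp hnsub
      exact ⟨w, hw1, hw2⟩
    obtain ⟨hfc, hfA⟩ := hfspec z hex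
    rw [hmem_cubeAt] at hfc
    rw [mem_cube_iff] at hzc
    constructor
    · constructor
      · -- f z ∈ superBlockSet d A i
        set x : Fin d → ℤ := fun l => z l / (i:ℤ) with hxdef
        have ht0 : (fun l => z l % (i:ℤ)) ∈ Set.Icc (0 : Fin d → ℤ) (fun _ => (i:ℤ) - 1) := by
          rw [Set.mem_Icc]
          constructor <;> intro l
          · show (0:ℤ) ≤ z l % (i:ℤ)
            exact Int.emod_nonneg _ (by positivity)
          · show z l % (i:ℤ) ≤ (i:ℤ) - 1
            have := Int.emod_lt_of_pos (z l) hi'; omega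
        have hxblock : x ∈ blockSet d A i := by
          refine ⟨fun l => z l % (i:ℤ), ht0, ?_⟩
          have : (i:ℤ) • x + (fun l => z l % (i:ℤ)) = z := by
            funext l
            simp only [Pi.add_apply, Pi.smul_apply, smul_eq_mul, hxdef]
            exact Int.mul_ediv_add_emod (z l) i
          rw [this]; exact hzA
        refine ⟨x, hxblock, fun l => f z l - (i:ℤ) * x l, ?_, ?_⟩
        · rw [Set.mem_Icc]
          refine ⟨fun l => ?_, fun l => ?_⟩ <;>
          · show _ ≤ _
            simp only [hxdef, Pi.zero_apply]
            have he := Int.mul_ediv_add_emod (z l) (i:ℤ)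
            have h1 := (hint l).1
            have h2 := (hint l).2
            have h3 := (hfc l).1
            have h4 := (hfc l).2
            omega
        · funext l
          simp only [Pi.add_apply, Pi.smul_apply, smul_eq_mul]
          ring
      · exact hfA
    · rw [mem_cube_iff]
      intro l
      have h1 := (hfc l).1
      have h2 := (hfc l).2
      have h3 := (hzc l).1
      have h4 := (hzc l).2
      constructor <;> push_cast <;> omega
  rw [Set.ncard_eq_toFinset_card _ hDfin, Set.ncard_eq_toFinset_card _ hEfin]
  have himage : hDfin.toFinset.image f ⊆ hEfin.toFinset := by
    intro v hv
    rw [Finset.mem_image] at hv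
    obtain ⟨z, hz, hfz⟩ := hv
    rw [Set.Finite.mem_toFinset] at hz ⊢
    rw [← hfz]
    exact hmapsE z hz
  have hfiber : ∀ b ∈ hDfin.toFinset.image f,
      (hDfin.toFinset.filter (fun z => f z = b)).card ≤ (2*k+1)^d := by
    intro b _
    have hsub : hDfin.toFinset.filter (fun z => f z = b) ⊆
        (Set.finite_Icc (fun l => b l - (k:ℤ)) (fun l => b l + (k:ℤ))).toFinset := by
      intro z hz
      rw [Finset.mem_filter, Set.Finite.mem_toFinset] at hz
      obtain ⟨hzD, hfz⟩ := hz
      have hex : ∃ w ∈ cubeAt d k z, w ∉ A := by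
        obtain ⟨w, hw1, hw2⟩ := Set.not_subset.mp hzD.2.1
        exact ⟨w, hw1, hw2⟩
      have hfc := (hfspec z hex).1
      rw [hmem_cubeAt, hfz] at hfc
      rw [Set.Finite.mem_toFinset, Set.mem_Icc]
      have hzc := hzD.1.2
      rw [mem_cube_iff] at hzc
      constructor <;> intro l
      · show b l - (k:ℤ) ≤ z l
        have h1 := (hfc l).1; have h2 := (hfc l).2; omega
      · show z l ≤ b l + (k:ℤ)
        have h1 := (hfc l).1; have h2 := (hfc l).2; omega
    calc (hDfin.toFinset.filter (fun z => f z = b)).card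
        ≤ (Set.finite_Icc (fun l => b l - (k:ℤ)) (fun l => b l + (k:ℤ))).toFinset.card :=
          Finset.card_le_card hsub
      _ = (2*k+1)^d := by
          rw [← Set.ncard_eq_toFinset_card _ (Set.finite_Icc _ _)]
          exact ncard_cubeAt d k b
  calc hDfin.toFinset.card ≤ (2*k+1)^d * (hDfin.toFinset.image f).card :=
        Finset.card_le_mul_card_image _ _ hfiber
    _ ≤ (2*k+1)^d * hEfin.toFinset.card :=
        Nat.mul_le_mul_left _ (Finset.card_le_card himage)

/-- The key counting inequality. -/
lemma key_count (d k i n : ℕ) (hki : 2*k+1 ≤ i) (A : Set (Fin d → ℤ)) :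
    (A ∩ cube d n).ncard ≤ ({z | cubeAt d k z ⊆ A} ∩ cube d n).ncard
      + d * ((2*k*(2*(n/i)+2)) * (2*n+1)^(d-1))
      + (2*k+1)^d * ((superBlockSet d A i \ A) ∩ cube d (n+k)).ncard := by
  classical
  have hi : 1 ≤ i := le_trans (by omega) hki
  set C := {z : Fin d → ℤ | cubeAt d k z ⊆ A} with hCdef
  set S : Fin d → Set (Fin d → ℤ) := fun j =>
    {z | z ∈ cube d n ∧ ((z j) % (i:ℤ) < k ∨ (i:ℤ) - k ≤ (z j) % (i:ℤ))} with hSdef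
  set D := {z | z ∈ A ∩ cube d n ∧ ¬ cubeAt d k z ⊆ A ∧
      ∀ j, (k:ℤ) ≤ (z j) % (i:ℤ) ∧ (z j) % (i:ℤ) ≤ (i:ℤ) - 1 - k} with hDdef
  have hSfin : ∀ j, (S j).Finite := fun j => (cube_finite d n).subset (fun z hz => hz.1)
  have hDfin : D.Finite := (cube_finite d n).subset (fun z hz => hz.1.2)
  have hCfin : (C ∩ cube d n).Finite := (cube_finite d n).subset Set.inter_subset_right
  have hsub : A ∩ cube d n ⊆ ((C ∩ cube d n) ∪ (⋃ j, S j)) ∪ D := by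
    intro z hz
    by_cases hzC : z ∈ C
    · exact Or.inl (Or.inl ⟨hzC, hz.2⟩)
    by_cases hint : ∀ j, (k:ℤ) ≤ (z j) % (i:ℤ) ∧ (z j) % (i:ℤ) ≤ (i:ℤ) - 1 - k
    · exact Or.inr ⟨hz, hzC, hint⟩
    · push_neg at hint
      obtain ⟨j, hj⟩ := hint
      refine Or.inl (Or.inr (Set.mem_iUnion.mpr ⟨j, hz.2, ?_⟩))
      rcases lt_or_ge ((z j) % (i:ℤ)) k with h | h
      · exact Or.inl h
      · exact Or.inr (by have := hj h; omega)
  have hUfin : (⋃ j, S j).Finite := Set.finite_iUnion hSfin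
  have hU : (⋃ j, S j).ncard ≤ d * ((2*k*(2*(n/i)+2)) * (2*n+1)^(d-1)) := by
    have hsub2 : (⋃ j, S j) ⊆ ↑(Finset.univ.biUnion (fun j => (hSfin j).toFinset)) := by
      intro z hz
      obtain ⟨j, hj⟩ := Set.mem_iUnion.mp hz
      simp only [Finset.coe_biUnion, Finset.coe_univ, Set.mem_iUnion,
        Finset.mem_coe, Set.Finite.mem_toFinset]
      exact ⟨j, Set.mem_univ j, hj⟩
    calc (⋃ j, S j).ncard
        ≤ (Finset.univ.biUnion (fun j => (hSfin j).toFinset)).card := by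
          rw [← Set.ncard_coe_finset]
          exact Set.ncard_le_ncard hsub2 (Finset.finite_toSet _)
      _ ≤ ∑ j : Fin d, ((hSfin j).toFinset).card := Finset.card_biUnion_le
      _ = ∑ j : Fin d, (S j).ncard := by
          refine Finset.sum_congr rfl (fun j _ => ?_)
          rw [Set.ncard_eq_toFinset_card _ (hSfin j)]
      _ ≤ ∑ _j : Fin d, (2*k*(2*(n/i)+2)) * (2*n+1)^(d-1) :=
          Finset.sum_le_sum (fun j _ => strip_bound d k i n hi j)
      _ = d * ((2*k*(2*(n/i)+2)) * (2*n+1)^(d-1)) := by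
          rw [Finset.sum_const, Finset.card_univ, Fintype.card_fin, smul_eq_mul]
  calc (A ∩ cube d n).ncard ≤ (((C ∩ cube d n) ∪ (⋃ j, S j)) ∪ D).ncard :=
        Set.ncard_le_ncard hsub (((hCfin.union hUfin).union hDfin))
    _ ≤ ((C ∩ cube d n) ∪ (⋃ j, S j)).ncard + D.ncard := Set.ncard_union_le _ _
    _ ≤ (C ∩ cube d n).ncard + (⋃ j, S j).ncard + D.ncard := by
        have := Set.ncard_union_le (C ∩ cube d n) (⋃ j, S j)
        omega
    _ ≤ (C ∩ cube d n).ncard + d * ((2*k*(2*(n/i)+2)) * (2*n+1)^(d-1))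
        + (2*k+1)^d * ((superBlockSet d A i \ A) ∩ cube d (n+k)).ncard := by
        have hD := hole_bound d k i n hki A
        rw [← hDdef] at hD
        omega

theorem stmt_7 (d : ℕ) (hd : 1 ≤ d) (A : Set (Fin d → ℤ)) (α : ℝ)
    (hA : lowerDensity d A = α) (hα : 0 < α)
    (hlim : Tendsto (fun i : ℕ => upperDensity d (superBlockSet d A i)) atTop (nhds α)) :
    ∀ k : ℕ, α ≤ lowerDensity d {z : Fin d → ℤ | cubeAt d k z ⊆ A} := by
  intro k
  classical
  set C := {z : Fin d → ℤ | cubeAt d k z ⊆ A} with hCdef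
  set M : ℝ := 2 + 4 * ((2*k+1 : ℕ) : ℝ)^d with hMdef
  have hM : 0 < M := by positivity
  have hbddC : IsBoundedUnder (· ≤ ·) atTop
      (fun n : ℕ => (Set.ncard (C ∩ cube d n) : ℝ) / (2 * (n : ℝ) + 1) ^ d) :=
    isBoundedUnder_of ⟨1, fun n => density_le_one d C n⟩
  have main : ∀ δ : ℝ, 0 < δ → δ ≤ 1 → α - δ * M ≤ lowerDensity d C := by
    intro δ hδ hδ1
    have hev1 : ∀ᶠ i in atTop, upperDensity d (superBlockSet d A i) < α + δ :=
      hlim.eventually_lt_const (by linarith)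
    have hev2 : ∀ᶠ i : ℕ in atTop, (4*(d:ℝ)*k : ℝ) ≤ δ * i := by
      filter_upwards [eventually_ge_atTop (⌈(4*(d:ℝ)*k)/δ⌉₊)] with i hi
      have h1 : ((4*(d:ℝ)*k)/δ) ≤ (i:ℝ) := le_trans (Nat.le_ceil _) (by exact_mod_cast hi)
      rw [div_le_iff₀ hδ] at h1
      linarith [h1]
    obtain ⟨i, hii⟩ := (hev1.and (hev2.and (eventually_ge_atTop (2*k+1)))).exists
    obtain ⟨hup, hik, hki⟩ := hii
    have hi1 : 1 ≤ i := by omega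
    have hipos : (0:ℝ) < i := by exact_mod_cast hi1
    have hbddA : IsBoundedUnder (· ≤ ·) atTop
        (fun n : ℕ => (Set.ncard (A ∩ cube d n) : ℝ) / (2 * (n : ℝ) + 1) ^ d) :=
      isBoundedUnder_of ⟨1, fun n => density_le_one d A n⟩
    have hEa : ∀ᶠ m : ℕ in atTop,
        (α - δ) * (2 * (m:ℝ) + 1) ^ d < (Set.ncard (A ∩ cube d m) : ℝ) := by
      have h0 : α - δ < liminf
          (fun n : ℕ => (Set.ncard (A ∩ cube d n) : ℝ) / (2 * (n : ℝ) + 1) ^ d) atTop := by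
        rw [show liminf (fun n : ℕ =>
          (Set.ncard (A ∩ cube d n) : ℝ) / (2 * (n : ℝ) + 1) ^ d) atTop
            = lowerDensity d A from rfl, hA]
        linarith
      have hbelow : IsBoundedUnder (· ≥ ·) atTop
          (fun n : ℕ => (Set.ncard (A ∩ cube d n) : ℝ) / (2 * (n : ℝ) + 1) ^ d) :=
        isBoundedUnder_of ⟨0, fun n => density_nonneg d A n⟩
      filter_upwards [eventually_lt_of_lt_liminf h0 hbelow] with m hm
      rw [lt_div_iff₀ (by positivity)] at hm
      linarith [hm]
    have hEs : ∀ᶠ m : ℕ in atTop,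
        (Set.ncard (superBlockSet d A i ∩ cube d m) : ℝ)
          < (α + δ) * (2 * (m:ℝ) + 1) ^ d := by
      have hbddS : IsBoundedUnder (· ≤ ·) atTop
          (fun n : ℕ => (Set.ncard (superBlockSet d A i ∩ cube d n) : ℝ)
            / (2 * (n : ℝ) + 1) ^ d) :=
        isBoundedUnder_of ⟨1, fun n => density_le_one d _ n⟩
      filter_upwards [eventually_lt_of_limsup_lt hup hbddS] with m hm
      rw [div_lt_iff₀ (by positivity)] at hm
      exact hm
    have hEbad : ∀ᶠ n : ℕ in atTop,
        ((d * ((2*k*(2*(n/i)+2)) * (2*n+1)^(d-1)) : ℕ) : ℝ)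
          ≤ δ * (2 * (n:ℝ) + 1) ^ d := by
      filter_upwards [eventually_ge_atTop (⌈(4*(d:ℝ)*k)/δ⌉₊)] with n hn
      have h1 : ((4*(d:ℝ)*k)/δ) ≤ (n:ℝ) := le_trans (Nat.le_ceil _) (by exact_mod_cast hn)
      rw [div_le_iff₀ hδ] at h1
      have hq : ((n/i : ℕ) : ℝ) ≤ (n:ℝ)/(i:ℝ) := Nat.cast_div_le
      have hstep : ((d * (2*k*(2*(n/i)+2)) : ℕ) : ℝ) ≤ δ * (2*(n:ℝ)+1) := by
        push_cast
        have h2 : 4*(d:ℝ)*(k:ℝ)*((n/i : ℕ):ℝ) ≤ δ * (n:ℝ) := by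
          calc 4*(d:ℝ)*(k:ℝ)*((n/i : ℕ):ℝ) ≤ 4*(d:ℝ)*(k:ℝ)*((n:ℝ)/(i:ℝ)) := by
                apply mul_le_mul_of_nonneg_left hq (by positivity)
            _ = (4*(d:ℝ)*(k:ℝ)) * ((n:ℝ) / (i:ℝ)) := by ring
            _ ≤ (δ * (i:ℝ)) * ((n:ℝ) / (i:ℝ)) := by
                apply mul_le_mul_of_nonneg_right hik (by positivity)
            _ = δ * (n:ℝ) := by field_simp
        nlinarith [h1, h2]
      have hpow : (2*(n:ℝ)+1)^d = (2*(n:ℝ)+1)^(d-1) * (2*(n:ℝ)+1) := by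
        rw [← pow_succ, Nat.sub_add_cancel hd]
      calc ((d * ((2*k*(2*(n/i)+2)) * (2*n+1)^(d-1)) : ℕ) : ℝ)
          = ((d * (2*k*(2*(n/i)+2)) : ℕ):ℝ) * (2*(n:ℝ)+1)^(d-1) := by push_cast; ring
        _ ≤ (δ * (2*(n:ℝ)+1)) * (2*(n:ℝ)+1)^(d-1) := by
            apply mul_le_mul_of_nonneg_right hstep (by positivity)
        _ = δ * (2*(n:ℝ)+1)^d := by rw [hpow]; ring
    have hratio : ∀ᶠ n : ℕ in atTop,
        (2 * ((n:ℝ)+(k:ℝ)) + 1) ^ d ≤ (1+δ) * (2 * (n:ℝ) + 1) ^ d := by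
      have h2 : Tendsto (fun n : ℕ => 2 * (n:ℝ) + 1) atTop atTop := by
        apply tendsto_atTop_add_const_right
        exact (tendsto_natCast_atTop_atTop).const_mul_atTop two_pos
      have h3 : Tendsto (fun n : ℕ => (2*(k:ℝ)) / (2 * (n:ℝ) + 1)) atTop (nhds 0) :=
        tendsto_const_nhds.div_atTop h2
      have h4 : Tendsto (fun n : ℕ => (1 + (2*(k:ℝ)) / (2 * (n:ℝ) + 1))^d) atTop (nhds 1) := by
        have h4' := ((tendsto_const_nhds (x := (1:ℝ)) (f := atTop (α := ℕ))).add h3).pow d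
        simpa using h4'
      have h5 : ∀ᶠ n : ℕ in atTop, (1 + (2*(k:ℝ)) / (2 * (n:ℝ) + 1))^d < 1 + δ :=
        h4.eventually_lt_const (by linarith)
      filter_upwards [h5] with n hn
      have hpos : (0:ℝ) < 2*(n:ℝ)+1 := by positivity
      have heq : (1 + (2*(k:ℝ)) / (2 * (n:ℝ) + 1)) = (2*((n:ℝ)+(k:ℝ))+1) / (2*(n:ℝ)+1) := by
        field_simp; ring
      rw [heq, div_pow, div_lt_iff₀ (by positivity)] at hn
      linarith [hn]
    have hEa' : ∀ᶠ n : ℕ in atTop, (α - δ) * (2 * ((n:ℝ)+(k:ℝ)) + 1) ^ d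
        < (Set.ncard (A ∩ cube d (n+k)) : ℝ) := by
      filter_upwards [(tendsto_add_atTop_nat k).eventually hEa] with n hn
      push_cast at hn
      exact hn
    have hEs' : ∀ᶠ n : ℕ in atTop, (Set.ncard (superBlockSet d A i ∩ cube d (n+k)) : ℝ)
        < (α + δ) * (2 * ((n:ℝ)+(k:ℝ)) + 1) ^ d := by
      filter_upwards [(tendsto_add_atTop_nat k).eventually hEs] with n hn
      push_cast at hn
      exact hn
    have hfinal : ∀ᶠ n : ℕ in atTop, α - δ * M ≤
        (Set.ncard (C ∩ cube d n) : ℝ) / (2 * (n : ℝ) + 1) ^ d := by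
      filter_upwards [hEa, hEa', hEs', hEbad, hratio] with n ha ha' hs hbad hrat
      have hN : (0:ℝ) < (2 * (n : ℝ) + 1) ^ d := by positivity
      rw [le_div_iff₀ hN]
      have hkeyR : (Set.ncard (A ∩ cube d n) : ℝ) ≤ (Set.ncard (C ∩ cube d n) : ℝ)
          + ((d * ((2*k*(2*(n/i)+2)) * (2*n+1)^(d-1)) : ℕ) : ℝ)
          + ((2*k+1:ℕ):ℝ)^d
            * (Set.ncard ((superBlockSet d A i \ A) ∩ cube d (n+k)) : ℝ) := by
        exact_mod_cast key_count d k i n hki A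
      have hdiffR : (Set.ncard ((superBlockSet d A i \ A) ∩ cube d (n+k)) : ℝ)
          + (Set.ncard (A ∩ cube d (n+k)) : ℝ)
          = (Set.ncard (superBlockSet d A i ∩ cube d (n+k)) : ℝ) := by
        exact_mod_cast diff_count d i (n+k) hi1 A
      have he : (Set.ncard ((superBlockSet d A i \ A) ∩ cube d (n+k)) : ℝ)
          ≤ 2 * δ * ((2*((n:ℝ)+(k:ℝ))+1)^d) := by
        linarith [hdiffR, hs, ha']
      have hN'pos : (0:ℝ) ≤ (2*((n:ℝ)+(k:ℝ))+1)^d := by positivity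
      have hKpos : (0:ℝ) ≤ ((2*k+1:ℕ):ℝ)^d := by positivity
      have he2 : (Set.ncard ((superBlockSet d A i \ A) ∩ cube d (n+k)) : ℝ)
          ≤ 2 * δ * ((1+δ) * (2 * (n:ℝ) + 1) ^ d) := by
        calc (Set.ncard ((superBlockSet d A i \ A) ∩ cube d (n+k)) : ℝ)
            ≤ 2 * δ * ((2*((n:ℝ)+(k:ℝ))+1)^d) := he
          _ ≤ 2 * δ * ((1+δ) * (2 * (n:ℝ) + 1) ^ d) := by
              apply mul_le_mul_of_nonneg_left hrat (by positivity)
      have hKe : ((2*k+1:ℕ):ℝ)^d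
            * (Set.ncard ((superBlockSet d A i \ A) ∩ cube d (n+k)) : ℝ)
          ≤ ((2*k+1:ℕ):ℝ)^d * (4 * δ * (2 * (n:ℝ) + 1) ^ d) := by
        apply mul_le_mul_of_nonneg_left _ hKpos
        have hnn : (0:ℝ) ≤ (1-δ) * δ * (2 * (n:ℝ) + 1) ^ d :=
          mul_nonneg (mul_nonneg (by linarith) hδ.le) hN.le
        nlinarith [he2, hnn]
      have hMN : (α - δ * M) * (2 * (n:ℝ) + 1) ^ d
          = (α - 2*δ) * (2 * (n:ℝ) + 1) ^ d
            - ((2*k+1:ℕ):ℝ)^d * (4 * δ * (2 * (n:ℝ) + 1) ^ d) := by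
        rw [hMdef]; ring
      rw [hMN]
      linarith [hkeyR, ha, hbad, hKe]
    exact le_liminf_of_le hbddC.isCoboundedUnder_ge hfinal
  by_contra hcon
  push_neg at hcon
  set L := lowerDensity d C with hLdef
  have hαL : 0 < α - L := by linarith
  set δ := min 1 ((α - L)/(2*M)) with hδdef
  have hδpos : 0 < δ := lt_min one_pos (div_pos hαL (by linarith))
  have h1 := main δ hδpos (min_le_left _ _)
  have h2 : δ * M ≤ (α - L)/2 := by
    calc δ * M ≤ ((α - L)/(2*M)) * M :=
          mul_le_mul_of_nonneg_right (min_le_right _ _) hM.le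
      _ = (α - L)/2 := by field_simp
  have h3 : α - L ≤ δ * M := by linarith [h1]
  have h4 : α - L ≤ (α - L)/2 := le_trans h3 h2
  linarith [hαL, h4]
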